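/- Let R(a) be an invertible operator on V ⊗ V depending on a parameter a and satisfying the Yang–Baxter equation R₁₂(a₁−a₂) R₁₃(a₁−a₃) R₂₃(a₂−a₃) = R₂₃(a₂−a₃) R₁₃(a₁−a₃) R₁₂(a₁−a₂). Let z be an invertible operator on V with [z ⊗ z, R(a)] = 0 for all a. Then the transfer matrices T_z(u) = tr₁((z ⊗ 1) R₁₂(u)) acting on the second factor satisfy [T_z(u), T_z(u')] = 0 for all u, u', provided additionally R₁₂(u−u') is invertible (Baxter commutativity). -/
import Mathlib


open Matrix Kronecker

variable {K : Type*} [Field K] {d : ℕ}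

/-- `M` acting in the factors 1,2 of `V ⊗ V ⊗ V` (matrix form, `V = K^d`). -/
def act12 (M : Matrix (Fin d × Fin d) (Fin d × Fin d) K) :
    Matrix (Fin d × Fin d × Fin d) (Fin d × Fin d × Fin d) K :=
  Matrix.of fun p q => M (p.1, p.2.1) (q.1, q.2.1) * (if p.2.2 = q.2.2 then 1 else 0)

/-- `M` acting in the factors 1,3 of `V ⊗ V ⊗ V`. -/
def act13 (M : Matrix (Fin d × Fin d) (Fin d × Fin d) K) :
    Matrix (Fin d × Fin d × Fin d) (Fin d × Fin d × Fin d) K :=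
  Matrix.of fun p q => M (p.1, p.2.2) (q.1, q.2.2) * (if p.2.1 = q.2.1 then 1 else 0)

/-- `M` acting in the factors 2,3 of `V ⊗ V ⊗ V`. -/
def act23 (M : Matrix (Fin d × Fin d) (Fin d × Fin d) K) :
    Matrix (Fin d × Fin d × Fin d) (Fin d × Fin d × Fin d) K :=
  Matrix.of fun p q => M (p.2.1, p.2.2) (q.2.1, q.2.2) * (if p.1 = q.1 then 1 else 0)

/-- The transfer matrix `T_z(u) = tr₁((z ⊗ 1) R₁₂(u))`, acting on the second
tensor factor: `T_z(u)_{ij} = Σ_{k,l} z_{kl} R(u)_{(l,i),(k,j)}`. -/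
def transferMatrix (z : Matrix (Fin d) (Fin d) K)
    (Ru : Matrix (Fin d × Fin d) (Fin d × Fin d) K) : Matrix (Fin d) (Fin d) K :=
  Matrix.of fun i j => ∑ k : Fin d, ∑ l : Fin d, z k l * Ru (l, i) (k, j)

lemma act12_mul (M N : Matrix (Fin d × Fin d) (Fin d × Fin d) K) :
    act12 (M * N) = act12 M * act12 N := by
  ext ⟨p1, p2, p3⟩ ⟨q1, q2, q3⟩
  simp [act12, Matrix.mul_apply, Fintype.sum_prod_type, mul_ite, ite_mul,
    Finset.sum_ite_eq, Finset.sum_ite_eq', Finset.mul_sum]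

lemma act12_one : act12 (1 : Matrix (Fin d × Fin d) (Fin d × Fin d) K) = 1 := by
  ext ⟨p1, p2, p3⟩ ⟨q1, q2, q3⟩
  simp [act12, Matrix.one_apply, Prod.ext_iff]
  aesop

/-- Partial trace over the first two tensor factors. -/
def pt12 (M : Matrix (Fin d × Fin d × Fin d) (Fin d × Fin d × Fin d) K) :
    Matrix (Fin d) (Fin d) K :=
  Matrix.of fun i j => ∑ a : Fin d, ∑ b : Fin d, M (a, b, i) (a, b, j)

lemma pt12_cyc (X : Matrix (Fin d × Fin d × Fin d) (Fin d × Fin d × Fin d) K)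
    (M : Matrix (Fin d × Fin d) (Fin d × Fin d) K) :
    pt12 (X * act12 M) = pt12 (act12 M * X) := by
  ext i j
  simp only [pt12, act12, Matrix.mul_apply, Fintype.sum_prod_type, Matrix.of_apply,
    mul_ite, ite_mul, mul_one, mul_zero, one_mul, zero_mul, Finset.sum_ite_eq,
    Finset.sum_ite_eq', Finset.mem_univ, if_true, Finset.sum_ite_irrel,
    Finset.sum_const_zero]
  -- reorder [a,b,c,e] → [c,e,a,b] on the left
  conv_lhs => enter [2, a]; rw [Finset.sum_comm]
  rw [Finset.sum_comm]
  conv_lhs => enter [2, c, 2, a]; rw [Finset.sum_comm]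
  conv_lhs => enter [2, c]; rw [Finset.sum_comm]
  exact Finset.sum_congr rfl fun _ _ => Finset.sum_congr rfl fun _ _ =>
    Finset.sum_congr rfl fun _ _ => Finset.sum_congr rfl fun _ _ => mul_comm _ _

lemma ptA (z : Matrix (Fin d) (Fin d) K)
    (Ru Ru' : Matrix (Fin d × Fin d) (Fin d × Fin d) K) :
    pt12 (act12 (z ⊗ₖ z) * act13 Ru * act23 Ru') =
      transferMatrix z Ru * transferMatrix z Ru' := by
  ext i j
  simp only [pt12, act12, act13, act23, transferMatrix, Matrix.mul_apply, Matrix.of_apply,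
    Fintype.sum_prod_type, Matrix.kroneckerMap_apply, mul_ite, ite_mul, mul_one, mul_zero,
    one_mul, zero_mul, Finset.sum_ite_eq, Finset.sum_ite_eq', Finset.mem_univ, if_true,
    Finset.sum_ite_irrel, Finset.sum_const_zero, Finset.mul_sum, Finset.sum_mul]
  -- reorder [a,b,c,e,g] → [e,b,c,a,g] on the left
  conv_lhs => enter [2, a, 2, b]; rw [Finset.sum_comm]
  conv_lhs => enter [2, a]; rw [Finset.sum_comm]
  rw [Finset.sum_comm]
  conv_lhs => enter [2, e]; rw [Finset.sum_comm]
  conv_lhs => enter [2, e, 2, b]; rw [Finset.sum_comm]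
  exact Finset.sum_congr rfl fun _ _ => Finset.sum_congr rfl fun _ _ =>
    Finset.sum_congr rfl fun _ _ => Finset.sum_congr rfl fun _ _ =>
      Finset.sum_congr rfl fun _ _ => by ring

lemma ptB (z : Matrix (Fin d) (Fin d) K)
    (Ru Ru' : Matrix (Fin d × Fin d) (Fin d × Fin d) K) :
    pt12 (act12 (z ⊗ₖ z) * act23 Ru' * act13 Ru) =
      transferMatrix z Ru' * transferMatrix z Ru := by
  ext i j
  simp only [pt12, act12, act13, act23, transferMatrix, Matrix.mul_apply, Matrix.of_apply,
    Fintype.sum_prod_type, Matrix.kroneckerMap_apply, mul_ite, ite_mul, mul_one, mul_zero,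
    one_mul, zero_mul, Finset.sum_ite_eq, Finset.sum_ite_eq', Finset.mem_univ, if_true,
    Finset.sum_ite_irrel, Finset.sum_const_zero, Finset.mul_sum, Finset.sum_mul]
  -- reorder [a,b,c,e,g] → [e,a,c,b,g] on the left
  conv_lhs => enter [2, a, 2, b]; rw [Finset.sum_comm]
  conv_lhs => enter [2, a]; rw [Finset.sum_comm]
  rw [Finset.sum_comm]
  conv_lhs => enter [2, e, 2, a]; rw [Finset.sum_comm]
  exact Finset.sum_congr rfl fun _ _ => Finset.sum_congr rfl fun _ _ =>
    Finset.sum_congr rfl fun _ _ => Finset.sum_congr rfl fun _ _ =>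
      Finset.sum_congr rfl fun _ _ => by ring

set_option maxHeartbeats 1000000 in
/-- Baxter commutativity: if `R(a) ∈ GL(V ⊗ V)` satisfies the Yang–Baxter equation
(with additive spectral parameters in an abelian group `A`) and `z ∈ GL(V)`
satisfies `[z ⊗ z, R(a)] = 0` for all `a`, then the transfer matrices
`T_z(u) = tr₁((z ⊗ 1) R₁₂(u))` commute: `[T_z(u), T_z(u')] = 0`, provided
`R(u − u')` is invertible. -/
theorem stmt8 (A : Type*) [AddCommGroup A]
    (R : A → Matrix (Fin d × Fin d) (Fin d × Fin d) K)
    (hRinv : ∀ a, IsUnit (R a))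
    (hYB : ∀ a₁ a₂ a₃ : A,
      act12 (R (a₁ - a₂)) * act13 (R (a₁ - a₃)) * act23 (R (a₂ - a₃)) =
      act23 (R (a₂ - a₃)) * act13 (R (a₁ - a₃)) * act12 (R (a₁ - a₂)))
    (z : Matrix (Fin d) (Fin d) K) (hz : IsUnit z)
    (hzz : ∀ a, (z ⊗ₖ z) * R a = R a * (z ⊗ₖ z)) :
    ∀ u u' : A, IsUnit (R (u - u')) →
      transferMatrix z (R u) * transferMatrix z (R u') =
        transferMatrix z (R u') * transferMatrix z (R u) := by
  intro u u' hU
  set P := R (u - u') with hP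
  have hPd : IsUnit P.det := (Matrix.isUnit_iff_isUnit_det _).mp hU
  have hPP : P * P⁻¹ = 1 := Matrix.mul_nonsing_inv _ hPd
  have hPP' : P⁻¹ * P = 1 := Matrix.nonsing_inv_mul _ hPd
  -- z ⊗ z commutes with P⁻¹
  have hzzinv : (z ⊗ₖ z) * P⁻¹ = P⁻¹ * (z ⊗ₖ z) := by
    calc (z ⊗ₖ z) * P⁻¹ = P⁻¹ * P * ((z ⊗ₖ z) * P⁻¹) := by rw [hPP', one_mul]
      _ = P⁻¹ * ((z ⊗ₖ z) * P * P⁻¹) := by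
          rw [mul_assoc, ← mul_assoc P, ← hzz (u - u')]
      _ = P⁻¹ * (z ⊗ₖ z) := by rw [mul_assoc, hPP, mul_one]
  have YB := hYB u u' 0
  simp only [sub_zero, ← hP] at YB
  -- key rearrangement
  have key : act12 (z ⊗ₖ z) * act13 (R u) * act23 (R u') =
      (act12 P⁻¹ * (act12 (z ⊗ₖ z) * act23 (R u') * act13 (R u))) * act12 P := by
    have h1 : act13 (R u) * act23 (R u') =
        act12 P⁻¹ * (act23 (R u') * act13 (R u) * act12 P) := by
      rw [← YB, ← mul_assoc, ← mul_assoc, ← act12_mul, hPP', act12_one, one_mul]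
    have h2 : act12 (z ⊗ₖ z) * act12 P⁻¹ = act12 P⁻¹ * act12 (z ⊗ₖ z) := by
      rw [← act12_mul, ← act12_mul, hzzinv]
    calc act12 (z ⊗ₖ z) * act13 (R u) * act23 (R u')
        = act12 (z ⊗ₖ z) * (act13 (R u) * act23 (R u')) := by rw [mul_assoc]
      _ = act12 (z ⊗ₖ z) * (act12 P⁻¹ * (act23 (R u') * act13 (R u) * act12 P)) := by
          rw [h1]
      _ = act12 (z ⊗ₖ z) * act12 P⁻¹ * (act23 (R u') * act13 (R u)) * act12 P := by
          simp only [mul_assoc]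
      _ = act12 P⁻¹ * (act12 (z ⊗ₖ z) * act23 (R u') * act13 (R u)) * act12 P := by
          rw [h2]; simp only [mul_assoc]
  calc transferMatrix z (R u) * transferMatrix z (R u')
      = pt12 (act12 (z ⊗ₖ z) * act13 (R u) * act23 (R u')) := (ptA z (R u) (R u')).symm
    _ = pt12 ((act12 P⁻¹ * (act12 (z ⊗ₖ z) * act23 (R u') * act13 (R u))) * act12 P) := by
        rw [key]
    _ = pt12 (act12 P * (act12 P⁻¹ * (act12 (z ⊗ₖ z) * act23 (R u') * act13 (R u)))) :=
        pt12_cyc _ _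
    _ = pt12 (act12 (z ⊗ₖ z) * act23 (R u') * act13 (R u)) := by
        rw [← mul_assoc, ← act12_mul, hPP, act12_one, one_mul]
    _ = transferMatrix z (R u') * transferMatrix z (R u) := ptB z (R u) (R u')
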